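/- Let g : ℕ → ℂ satisfy Σ_{n ≥ 1} 2^{k·ω(n)} |(μ*g)(n)| / n^k < ∞ for a fixed k ∈ ℕ. Then for all n₁,…,n_k ∈ ℕ, g(gcd(n₁,…,n_k)) = Σ_{q₁,…,q_k ≥ 1} a_{q₁,…,q_k} c_{q₁}(n₁)⋯c_{q_k}(n_k), absolutely convergent, where a_{q₁,…,q_k} = (1/Q^k) Σ_{m ≥ 1} (μ*g)(mQ)/m^k with Q = lcm(q₁,…,q_k). -/

import Mathlib

open Complex Finset

noncomputable section

/-- Number of distinct prime factors. -/
def omega (n : ℕ) : ℕ := n.primeFactors.card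

/-- The unitary gcd `(k,q)_* = max {d : d ∣ k, d ∣∣ q}`. -/
def ugcd (k q : ℕ) : ℕ :=
  ((q.divisors).filter (fun d => d ∣ k ∧ Nat.Coprime d (q / d))).sup id

/-- The set of unitary divisors of `q`. -/
def unitaryDivisors (q : ℕ) : Finset ℕ :=
  q.divisors.filter (fun d => Nat.Coprime d (q / d))

/-- The unitary Ramanujan sum `c*_q(n)`. -/
def cstar (q n : ℕ) : ℂ :=
  ∑ k ∈ Finset.Icc 1 q,
    if ugcd k q = 1 then Complex.exp (2 * Real.pi * Complex.I * k * n / q) else 0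

/-- The classical Ramanujan sum `c_q(n)`. -/
def cc (q n : ℕ) : ℂ :=
  ∑ k ∈ Finset.Icc 1 q,
    if Nat.gcd k q = 1 then Complex.exp (2 * Real.pi * Complex.I * k * n / q) else 0

/-- The Dirichlet convolution `μ * g` of the Möbius function with `g`. -/
def mconv (g : ℕ → ℂ) (n : ℕ) : ℂ :=
  ∑ d ∈ n.divisors, (ArithmeticFunction.moebius d : ℂ) * g (n / d)


open ArithmeticFunction
open scoped ArithmeticFunction.Moebius


lemma two_pi_I_ne_zero' : (2 * (Real.pi:ℂ) * Complex.I) ≠ 0 := by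
  simp [Real.pi_ne_zero, Complex.I_ne_zero]

lemma sum_exp_divides (d n : ℕ) (hd : 0 < d) :
    ∑ j ∈ Finset.Icc 1 d, Complex.exp (2 * Real.pi * Complex.I * j * n / d)
      = if d ∣ n then (d : ℂ) else 0 := by
  have hd0 : (d : ℂ) ≠ 0 := Nat.cast_ne_zero.2 hd.ne'
  set z : ℂ := Complex.exp (2 * Real.pi * Complex.I * n / d) with hz
  have hzj : ∀ j : ℕ, Complex.exp (2 * Real.pi * Complex.I * j * n / d) = z ^ j := by
    intro j
    rw [hz, ← Complex.exp_nat_mul]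
    ring_nf
  simp only [hzj]
  by_cases h : d ∣ n
  · obtain ⟨m, rfl⟩ := h
    have hz1 : z = 1 := by
      rw [hz]
      apply Complex.exp_eq_one_iff.2 ⟨m, ?_⟩
      push_cast
      field_simp
    rw [if_pos (dvd_mul_right d m)]
    simp [hz1, Nat.card_Icc]
  · have hz1 : z ≠ 1 := by
      intro hz1
      obtain ⟨m, hm⟩ := Complex.exp_eq_one_iff.1 (hz ▸ hz1)
      have h3 : (2*(Real.pi:ℂ)*Complex.I) * n = (2*(Real.pi:ℂ)*Complex.I) * (m*d) := by
        field_simp at hm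
        linear_combination (2*(Real.pi:ℂ)*Complex.I) * hm
      have h4 : (n:ℂ) = (m:ℂ)*d := mul_left_cancel₀ two_pi_I_ne_zero' h3
      have h5 : (n:ℤ) = m * d := by exact_mod_cast h4
      exact h (Int.natCast_dvd_natCast.mp ⟨m, by rw [h5]; ring⟩)
    have hzd : z ^ d = 1 := by
      rw [hz, ← Complex.exp_nat_mul]
      apply Complex.exp_eq_one_iff.2 ⟨n, ?_⟩
      push_cast
      field_simp
    have hIcc : Finset.Icc 1 d = Finset.Ico 1 (d + 1) := by
      rw [Nat.Icc_eq_range', Nat.Ico_eq_range']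
    rw [hIcc, geom_sum_Ico hz1 (by omega), pow_succ, hzd, one_mul, pow_one, sub_self, zero_div,
      if_neg h]

lemma sum_cc_divisors (d n : ℕ) (hd : 0 < d) :
    ∑ q ∈ d.divisors, cc q n = if d ∣ n then (d : ℂ) else 0 := by
  have hd0 : (d : ℂ) ≠ 0 := Nat.cast_ne_zero.2 hd.ne'
  rw [← sum_exp_divides d n hd]
  simp only [cc, ← Finset.sum_filter]
  rw [Finset.sum_sigma']
  apply Finset.sum_nbij' (i := fun p => p.2 * (d / p.1))
      (j := fun m => ⟨d / m.gcd d, m / m.gcd d⟩)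
  · rintro ⟨q, kk⟩ hqk
    simp only [Finset.mem_sigma, Nat.mem_divisors, Finset.mem_filter, Finset.mem_Icc] at hqk
    obtain ⟨⟨hqd, -⟩, ⟨hk1, hkq⟩, -⟩ := hqk
    have hq0 : 0 < q := by
      rcases Nat.eq_zero_or_pos q with h | h
      · subst h; omega
      · exact h
    have hdq : 0 < d / q := Nat.div_pos (Nat.le_of_dvd hd hqd) hq0
    simp only [Finset.mem_Icc]
    constructor
    · exact Nat.one_le_iff_ne_zero.2 (by positivity)
    · calc kk * (d / q) ≤ q * (d / q) := Nat.mul_le_mul_right _ hkq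
        _ = d := Nat.mul_div_cancel' hqd
  · intro m hm
    simp only [Finset.mem_Icc] at hm
    obtain ⟨hm1, hmd⟩ := hm
    have hg : 0 < m.gcd d := Nat.gcd_pos_of_pos_right m hd
    simp only [Finset.mem_sigma, Nat.mem_divisors, Finset.mem_filter, Finset.mem_Icc]
    refine ⟨⟨Nat.div_dvd_of_dvd (Nat.gcd_dvd_right m d), hd.ne'⟩,
      ⟨Nat.one_le_iff_ne_zero.2 ?_, Nat.div_le_div_right hmd⟩,
      Nat.coprime_div_gcd_div_gcd hg⟩
    have : m.gcd d ∣ m := Nat.gcd_dvd_left m d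
    have := Nat.div_pos (Nat.le_of_dvd (by omega) this) hg
    omega
  · rintro ⟨q, kk⟩ hqk
    simp only [Finset.mem_sigma, Nat.mem_divisors, Finset.mem_filter, Finset.mem_Icc] at hqk
    obtain ⟨⟨hqd, -⟩, ⟨hk1, hkq⟩, hcop⟩ := hqk
    have hq0 : 0 < q := by omega
    have hdq : 0 < d / q := Nat.div_pos (Nat.le_of_dvd hd hqd) hq0
    have hgcd : (kk * (d / q)).gcd d = d / q := by
      calc (kk * (d / q)).gcd d = (kk * (d / q)).gcd (q * (d / q)) := by
            rw [Nat.mul_div_cancel' hqd]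
        _ = kk.gcd q * (d / q) := Nat.gcd_mul_right _ _ _
        _ = d / q := by rw [hcop, one_mul]
    have h1 : d / (d / q) = q := Nat.div_div_self hqd hd.ne'
    ext
    · simp [hgcd, h1]
    · simp [hgcd, Nat.mul_div_cancel kk hdq]
  · intro m hm
    simp only [Finset.mem_Icc] at hm
    have hg : m.gcd d ∣ m := Nat.gcd_dvd_left m d
    have : d / (d / m.gcd d) = m.gcd d :=
      Nat.div_div_self (Nat.gcd_dvd_right m d) hd.ne'
    simp only [this]
    exact Nat.div_mul_cancel hg
  · rintro ⟨q, kk⟩ hqk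
    simp only [Finset.mem_sigma, Nat.mem_divisors, Finset.mem_filter, Finset.mem_Icc] at hqk
    obtain ⟨⟨hqd, -⟩, ⟨hk1, hkq⟩, hcop⟩ := hqk
    have hq0 : 0 < q := by omega
    have hq0' : (q : ℂ) ≠ 0 := Nat.cast_ne_zero.2 hq0.ne'
    congr 1
    have hdq : ((d / q : ℕ) : ℂ) * q = d := by
      exact_mod_cast Nat.div_mul_cancel hqd
    rw [div_eq_div_iff hq0' hd0]
    push_cast
    linear_combination (-(2 * (Real.pi:ℂ) * Complex.I * kk * n)) * hdq

-- Lemma 3 : explicit formula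
lemma cc_eq (q n : ℕ) (hq : 0 < q) :
    cc q n = ∑ e ∈ q.divisors, ((μ (q / e) : ℤ) : ℂ) * (if e ∣ n then (e : ℂ) else 0) := by
  have h := (sum_eq_iff_sum_smul_moebius_eq (f := fun q => cc q n)
      (g := fun d => if d ∣ n then (d : ℂ) else 0)).mp
    (fun m hm => sum_cc_divisors m n hm) q hq
  rw [← h, Nat.sum_divisorsAntidiagonal' (f := fun a b => (μ a : ℤ) • (if b ∣ n then (b:ℂ) else 0))]
  apply Finset.sum_congr rfl
  intro e _
  rw [zsmul_eq_mul]

-- Möbius inversion: sum of mconv over divisors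
lemma sum_mconv_divisors (g : ℕ → ℂ) (G : ℕ) (hG : 0 < G) :
    ∑ d ∈ G.divisors, mconv g d = g G := by
  refine (sum_eq_iff_sum_smul_moebius_eq (f := fun d => mconv g d) (g := g)).mpr ?_ G hG
  intro m _
  rw [Nat.sum_divisorsAntidiagonal (f := fun a b => (μ a : ℤ) • g b)]
  unfold mconv
  apply Finset.sum_congr rfl
  intro e _
  rw [zsmul_eq_mul]

-- sum of |mu| over divisors
lemma sum_abs_moebius (d : ℕ) (hd : 0 < d) :
    ∑ s ∈ d.divisors, |((μ s : ℤ) : ℝ)| = 2 ^ (omega d) := by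
  classical
  have h1 : ∑ s ∈ d.divisors, |((μ s : ℤ) : ℝ)|
      = ∑ s ∈ d.divisors.filter Squarefree, (1 : ℝ) := by
    rw [Finset.sum_filter]
    apply Finset.sum_congr rfl
    intro s _
    by_cases hs : Squarefree s
    · rw [if_pos hs]
      have := ArithmeticFunction.abs_moebius_eq_one_of_squarefree hs
      rw [show |((μ s : ℤ) : ℝ)| = ((|μ s| : ℤ) : ℝ) by push_cast; ring, this]
      norm_num
    · rw [if_neg hs, ArithmeticFunction.moebius_eq_zero_of_not_squarefree hs]
      norm_num
  rw [h1, Nat.sum_divisors_filter_squarefree hd.ne', Finset.sum_const, Finset.card_powerset]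
  have : (UniqueFactorizationMonoid.normalizedFactors d).toFinset = d.primeFactors := by
    rw [Nat.factors_eq]
    rfl
  simp [this, omega]

lemma sum_abs_cc_le (d n : ℕ) (hd : 0 < d) (hn : 0 < n) :
    ∑ q ∈ d.divisors, ‖cc q n‖ ≤ (n : ℝ)^2 * 2 ^ (omega d) := by
  classical
  set t : ℕ → ℕ → ℝ := fun e s => (if e ∣ n then (e : ℝ) else 0) * |((μ s : ℤ) : ℝ)| with ht
  have htnn : ∀ e s, 0 ≤ t e s := by
    intro e s
    apply mul_nonneg _ (abs_nonneg _)
    split <;> positivity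
  have step1 : ∀ q ∈ d.divisors, ‖cc q n‖
      ≤ ∑ x ∈ q.divisorsAntidiagonal, t x.1 x.2 := by
    intro q hq
    rw [Nat.mem_divisors] at hq
    have hq0 : 0 < q := Nat.pos_of_dvd_of_pos hq.1 hd
    rw [cc_eq q n hq0, Nat.sum_divisorsAntidiagonal (f := fun a b => t a b)]
    refine (norm_sum_le _ _).trans (le_of_eq ?_)
    apply Finset.sum_congr rfl
    intro e _
    rw [norm_mul, ht]
    simp only []
    rw [Complex.norm_intCast]
    rw [mul_comm]
    congr 1
    split
    · exact Complex.norm_natCast e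
    · exact norm_zero
  have step2 : ∑ q ∈ d.divisors, ∑ x ∈ q.divisorsAntidiagonal, t x.1 x.2
      ≤ ∑ x ∈ d.divisors ×ˢ d.divisors, t x.1 x.2 := by
    rw [← Finset.sum_biUnion]
    · apply Finset.sum_le_sum_of_subset_of_nonneg
      · intro x hx
        rw [Finset.mem_biUnion] at hx
        obtain ⟨q, hq, hxq⟩ := hx
        rw [Nat.mem_divisors] at hq
        rw [Nat.mem_divisorsAntidiagonal] at hxq
        rw [Finset.mem_product, Nat.mem_divisors, Nat.mem_divisors]
        exact ⟨⟨(Dvd.intro _ hxq.1).trans hq.1, hd.ne'⟩,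
          ⟨(Dvd.intro_left _ hxq.1).trans hq.1, hd.ne'⟩⟩
      · intro x _ _
        exact htnn _ _
    · intro a _ b _ hab
      apply Finset.disjoint_left.mpr
      intro x hxa hxb
      rw [Nat.mem_divisorsAntidiagonal] at hxa hxb
      exact hab (hxa.1.symm.trans hxb.1)
  have step3 : ∑ x ∈ d.divisors ×ˢ d.divisors, t x.1 x.2
      = (∑ e ∈ d.divisors, if e ∣ n then (e:ℝ) else 0) * (∑ s ∈ d.divisors, |((μ s : ℤ) : ℝ)|) := by
    rw [Finset.sum_mul_sum, ← Finset.sum_product']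
  have step4 : (∑ e ∈ d.divisors, if e ∣ n then (e:ℝ) else 0) ≤ (n : ℝ)^2 := by
    rw [← Finset.sum_filter]
    have hsub : d.divisors.filter (· ∣ n) ⊆ Finset.Icc 1 n := by
      intro e he
      rw [Finset.mem_filter, Nat.mem_divisors] at he
      rw [Finset.mem_Icc]
      exact ⟨Nat.pos_of_dvd_of_pos he.1.1 hd, Nat.le_of_dvd hn he.2⟩
    refine (Finset.sum_le_sum_of_subset_of_nonneg hsub (by intros; positivity)).trans ?_
    have : ∀ e ∈ Finset.Icc 1 n, (e : ℝ) ≤ (n : ℝ) := by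
      intro e he
      rw [Finset.mem_Icc] at he
      exact_mod_cast he.2
    refine (Finset.sum_le_card_nsmul _ _ _ this).trans ?_
    simp [Nat.card_Icc, sq]
  calc ∑ q ∈ d.divisors, ‖cc q n‖
      ≤ ∑ q ∈ d.divisors, ∑ x ∈ q.divisorsAntidiagonal, t x.1 x.2 :=
        Finset.sum_le_sum step1
    _ ≤ ∑ x ∈ d.divisors ×ˢ d.divisors, t x.1 x.2 := step2
    _ = _ := step3
    _ ≤ (n : ℝ)^2 * 2 ^ (omega d) := by
        rw [sum_abs_moebius d hd]
        apply mul_le_mul_of_nonneg_right step4 (by positivity)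

/-- divisors of a positive natural, as a finset of `ℕ+`. -/
def Dfin (d : ℕ+) : Finset ℕ+ :=
  (d : ℕ).divisors.preimage ((↑) : ℕ+ → ℕ) (PNat.coe_injective.injOn)

lemma mem_Dfin {d : ℕ+} {e : ℕ+} : e ∈ Dfin d ↔ (e : ℕ) ∣ (d : ℕ) := by
  simp [Dfin, Nat.mem_divisors, d.ne_zero]

lemma sum_Dfin (d : ℕ+) (h : ℕ → ℂ) : ∑ e ∈ Dfin d, h (e : ℕ) = ∑ e ∈ (d:ℕ).divisors, h e := by
  apply Finset.sum_preimage
  intro x hx hr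
  exfalso
  exact hr ⟨⟨x, Nat.pos_of_mem_divisors hx⟩, rfl⟩

lemma sum_Dfin_real (d : ℕ+) (h : ℕ → ℝ) : ∑ e ∈ Dfin d, h (e : ℕ) = ∑ e ∈ (d:ℕ).divisors, h e := by
  apply Finset.sum_preimage
  intro x hx hr
  exfalso
  exact hr ⟨⟨x, Nat.pos_of_mem_divisors hx⟩, rfl⟩


set_option maxHeartbeats 1000000 in
theorem stmt14 (k : ℕ) (hk : 1 ≤ k) (g : ℕ → ℂ)
    (hsum : Summable (fun n : ℕ+ =>
      (2 : ℝ) ^ (k * omega n) * ‖mconv g n‖ / ((n : ℕ) : ℝ) ^ k)) :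
    ∀ n : Fin k → ℕ+,
      HasSum (fun q : Fin k → ℕ+ =>
        ((1 / ((Finset.univ.lcm (fun i => ((q i : ℕ))) : ℕ) : ℂ) ^ k) *
            ∑' m : ℕ+, mconv g ((m : ℕ) * Finset.univ.lcm (fun i => ((q i : ℕ)))) / ((m : ℕ) : ℂ) ^ k)
          * ∏ i, cc (q i) (n i))
        (g (Finset.univ.gcd (fun i => ((n i : ℕ))))) := by
  classical
  intro n
  set G : ℕ := Finset.univ.gcd (fun i => ((n i : ℕ))) with hGdef
  have hGpos : 0 < G := by
    rw [Nat.pos_iff_ne_zero]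
    intro h
    have := Finset.gcd_eq_zero_iff.mp h ⟨0, hk⟩ (Finset.mem_univ _)
    exact (n ⟨0, hk⟩).ne_zero this
  set Q : (Fin k → ℕ+) → ℕ := fun q => Finset.univ.lcm (fun i => ((q i : ℕ))) with hQdef
  have hQpos : ∀ q, 0 < Q q := by
    intro q
    rw [Nat.pos_iff_ne_zero]
    intro h
    obtain ⟨i, -, hi⟩ := Finset.lcm_eq_zero_iff.mp h
    exact (q i).ne_zero hi
  set f : ℕ → ℂ := fun d => mconv g d / (d:ℂ)^k with hfdef
  set P : (Fin k → ℕ+) → ℂ := fun q => ∏ i, cc (q i) (n i) with hPdef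
  set G' : ℕ+ × (Fin k → ℕ+) → ℂ :=
    fun p => if (∀ i, ((p.2 i : ℕ)) ∣ (p.1:ℕ)) then f p.1 * P p.2 else 0 with hG'def
  set Pi' : ℕ+ → Finset (Fin k → ℕ+) := fun d => Fintype.piFinset (fun _ => Dfin d) with hPi'def
  have hmemPi : ∀ (d : ℕ+) (q : Fin k → ℕ+), q ∈ Pi' d ↔ ∀ i, ((q i : ℕ)) ∣ (d:ℕ) := by
    intro d q
    simp [hPi'def, Fintype.mem_piFinset, mem_Dfin]
  -- G' vanishes off Pi' d
  have hG'zero : ∀ (d : ℕ+) (q : Fin k → ℕ+), q ∉ Pi' d → G' (d, q) = 0 := by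
    intro d q hq
    rw [hG'def]
    simp only
    rw [if_neg]
    intro hc
    exact hq ((hmemPi d q).mpr hc)
  have hG'on : ∀ (d : ℕ+) (q : Fin k → ℕ+), q ∈ Pi' d → G' (d, q) = f d * P q := by
    intro d q hq
    rw [hG'def]
    simp only
    rw [if_pos ((hmemPi d q).mp hq)]
  -- product-of-sums identity for a fixed d
  have hprodsum : ∀ d : ℕ+, ∑ q ∈ Pi' d, P q
      = ∏ i, ∑ e ∈ (d:ℕ).divisors, cc e ((n i : ℕ)) := by
    intro d
    calc ∑ q ∈ Pi' d, P q
        = ∑ q ∈ Fintype.piFinset (fun _ : Fin k => Dfin d), ∏ i, cc ((q i : ℕ)) ((n i : ℕ)) := by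
          simp only [hPi'def, hPdef]
      _ = ∏ i, ∑ e ∈ Dfin d, cc ((e : ℕ)) ((n i : ℕ)) :=
          (Finset.prod_univ_sum (fun _ : Fin k => Dfin d)
            (fun i e => cc ((e : ℕ)) ((n i : ℕ)))).symm
      _ = ∏ i, ∑ e ∈ (d:ℕ).divisors, cc e ((n i : ℕ)) :=
          Finset.prod_congr rfl (fun i _ => sum_Dfin d (fun e => cc e ((n i : ℕ))))
  have hfibsum : ∀ d : ℕ+, ∑ q ∈ Pi' d, (f d * P q)
      = if (d:ℕ) ∣ G then mconv g (d:ℕ) else 0 := by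
    intro d
    rw [← Finset.mul_sum]
    have h2 : ∑ q ∈ Pi' d, P q = ∏ i, (if (d:ℕ) ∣ ((n i : ℕ)) then ((d:ℕ) : ℂ) else 0) := by
      rw [hprodsum d]
      apply Finset.prod_congr rfl
      intro i _
      exact sum_cc_divisors (d:ℕ) ((n i : ℕ)) d.pos
    rw [h2]
    by_cases h : ∀ i, (d:ℕ) ∣ ((n i : ℕ))
    · have hdG : (d:ℕ) ∣ G := Finset.dvd_gcd (fun i _ => h i)
      rw [if_pos hdG]
      have : ∏ i : Fin k, (if (d:ℕ) ∣ ((n i : ℕ)) then ((d:ℕ) : ℂ) else 0) = ((d:ℕ):ℂ)^k := by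
        rw [Finset.prod_congr rfl (fun i _ => if_pos (h i)), Finset.prod_const]
        simp
      rw [this, hfdef]
      simp only
      rw [div_mul_cancel₀]
      exact pow_ne_zero _ (Nat.cast_ne_zero.mpr d.ne_zero)
    · push_neg at h
      obtain ⟨i, hi⟩ := h
      have hdG : ¬ (d:ℕ) ∣ G := by
        intro hc
        exact hi (hc.trans (Finset.gcd_dvd (Finset.mem_univ i)))
      rw [if_neg hdG,
        show (∏ j, if (d:ℕ) ∣ ((n j : ℕ)) then ((d:ℕ):ℂ) else 0) = 0 from
          Finset.prod_eq_zero (Finset.mem_univ i) (if_neg hi), mul_zero]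
  -- summability of the norms
  set C : ℝ := ∏ i : Fin k, (((n i : ℕ)) : ℝ)^2 with hCdef
  have hCnn : 0 ≤ C := Finset.prod_nonneg (fun i _ => by positivity)
  have habs_fd : ∀ d : ℕ+, ‖f d‖ = ‖mconv g (d:ℕ)‖ / ((d:ℕ):ℝ)^k := by
    intro d
    rw [hfdef]
    simp only
    rw [norm_div, norm_pow, Complex.norm_natCast]
  have hnormfib : ∀ d : ℕ+, ∑ q ∈ Pi' d, ‖f d * P q‖
      ≤ C * ((2:ℝ) ^ (k * omega (d:ℕ)) * ‖mconv g (d:ℕ)‖ / ((d:ℕ):ℝ)^k) := by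
    intro d
    have h1 : ∀ q, ‖f d * P q‖
        = ‖f d‖ * ∏ i, ‖cc ((q i : ℕ)) ((n i : ℕ))‖ := by
      intro q
      rw [norm_mul, hPdef]
      simp only
      rw [norm_prod]
    calc ∑ q ∈ Pi' d, ‖f d * P q‖
        = ‖f d‖ * ∑ q ∈ Pi' d, ∏ i, ‖cc ((q i : ℕ)) ((n i : ℕ))‖ := by
          rw [Finset.mul_sum]
          exact Finset.sum_congr rfl (fun q _ => h1 q)
      _ = ‖f d‖ * ∏ i, ∑ e ∈ (d:ℕ).divisors, ‖cc e ((n i : ℕ))‖ := by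
          congr 1
          calc ∑ q ∈ Pi' d, ∏ i, ‖cc ((q i : ℕ)) ((n i : ℕ))‖
              = ∑ q ∈ Fintype.piFinset (fun _ : Fin k => Dfin d),
                  ∏ i, ‖cc ((q i : ℕ)) ((n i : ℕ))‖ := by simp only [hPi'def]
            _ = ∏ i, ∑ e ∈ Dfin d, ‖cc ((e : ℕ)) ((n i : ℕ))‖ :=
                (Finset.prod_univ_sum (fun _ : Fin k => Dfin d)
                  (fun i e => ‖cc ((e : ℕ)) ((n i : ℕ))‖)).symm
            _ = ∏ i, ∑ e ∈ (d:ℕ).divisors, ‖cc e ((n i : ℕ))‖ :=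
                Finset.prod_congr rfl
                  (fun i _ => sum_Dfin_real d (fun e => ‖cc e ((n i : ℕ))‖))
      _ ≤ ‖f d‖ * ∏ i, ((((n i : ℕ)):ℝ)^2 * 2 ^ (omega (d:ℕ))) := by
          apply mul_le_mul_of_nonneg_left _ (norm_nonneg _)
          apply Finset.prod_le_prod
          · intro i _
            exact Finset.sum_nonneg (fun e _ => norm_nonneg _)
          · intro i _
            exact sum_abs_cc_le (d:ℕ) ((n i : ℕ)) d.pos (n i).pos
      _ = C * ((2:ℝ) ^ (k * omega (d:ℕ)) * ‖mconv g (d:ℕ)‖ / ((d:ℕ):ℝ)^k) := by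
          rw [Finset.prod_mul_distrib, Finset.prod_const, habs_fd d]
          rw [Finset.card_univ, Fintype.card_fin, ← pow_mul, hCdef]
          ring
  have hfibsummable : ∀ d : ℕ+, Summable (fun q => G' (d, q)) := by
    intro d
    exact summable_of_ne_finset_zero (s := Pi' d) (fun q hq => hG'zero d q hq)
  have hnu : Summable (fun p : ℕ+ × (Fin k → ℕ+) => ‖G' p‖) := by
    apply (summable_prod_of_nonneg (fun p => norm_nonneg _)).mpr
    constructor
    · intro d
      apply summable_of_ne_finset_zero (s := Pi' d)
      intro q hq
      rw [hG'zero d q hq, norm_zero]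
    · apply Summable.of_nonneg_of_le
        (fun d => tsum_nonneg (fun q => norm_nonneg _))
        (fun d => ?_) (hsum.mul_left C)
      have heq : ∑' q, ‖G' (d, q)‖ = ∑ q ∈ Pi' d, ‖G' (d, q)‖ :=
        tsum_eq_sum (fun q hq => by rw [hG'zero d q hq, norm_zero])
      rw [heq]
      calc ∑ q ∈ Pi' d, ‖G' (d, q)‖
          = ∑ q ∈ Pi' d, ‖f d * P q‖ :=
            Finset.sum_congr rfl (fun q hq => by rw [hG'on d q hq])
        _ ≤ C * ((2:ℝ) ^ (k * omega (d:ℕ)) * ‖mconv g (d:ℕ)‖ / ((d:ℕ):ℝ)^k) :=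
            hnormfib d
  have hG'sum : Summable G' := by
    apply Summable.of_norm
    exact hnu
  -- value of the total sum
  set GG : ℕ+ := ⟨G, hGpos⟩ with hGGdef
  have htsum : ∑' p, G' p = g G := by
    rw [Summable.tsum_prod' hG'sum hfibsummable]
    have h2 : ∀ d : ℕ+, ∑' q, G' (d, q) = if (d:ℕ) ∣ G then mconv g (d:ℕ) else 0 := by
      intro d
      rw [tsum_eq_sum (s := Pi' d) (fun q hq => hG'zero d q hq)]
      rw [Finset.sum_congr rfl (fun q hq => hG'on d q hq), hfibsum d]
    rw [tsum_congr h2]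
    rw [tsum_eq_sum (s := Dfin GG) ?later]
    case later =>
      intro d hd
      rw [if_neg]
      intro hc
      exact hd (mem_Dfin.mpr hc)
    have h3 : ∀ d : ℕ+, d ∈ Dfin GG → (if (d:ℕ) ∣ G then mconv g (d:ℕ) else 0) = mconv g (d:ℕ) := by
      intro d hd
      have hdvd : (d:ℕ) ∣ G := mem_Dfin.mp hd
      rw [if_pos hdvd]
    rw [Finset.sum_congr rfl h3, sum_Dfin GG (fun e => mconv g e)]
    exact sum_mconv_divisors g G hGpos
  have hG'has : HasSum G' (g G) := htsum ▸ hG'sum.hasSum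
  -- transfer to the (q, m) parametrization
  set Qp : (Fin k → ℕ+) → ℕ+ := fun q => ⟨Q q, hQpos q⟩ with hQpdef
  set ψ : (Fin k → ℕ+) × ℕ+ → ℕ+ × (Fin k → ℕ+) := fun p => (p.2 * Qp p.1, p.1) with hψdef
  have hψinj : Function.Injective ψ := by
    intro p p' h
    rw [hψdef] at h
    simp only [Prod.mk.injEq] at h
    obtain ⟨h1, h2⟩ := h
    rw [h2] at h1
    exact Prod.ext (by exact h2) (mul_right_cancel h1)
  have hψrange : ∀ x ∉ Set.range ψ, G' x = 0 := by
    rintro ⟨d, q⟩ hx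
    rw [hG'def]
    simp only
    rw [if_neg]
    intro hc
    apply hx
    have hQdvd : Q q ∣ (d:ℕ) := Finset.lcm_dvd (fun i _ => hc i)
    refine ⟨(q, ⟨(d:ℕ) / Q q, Nat.div_pos (Nat.le_of_dvd d.pos hQdvd) (hQpos q)⟩), ?_⟩
    rw [hψdef]
    simp only [Prod.mk.injEq]
    constructor
    · apply PNat.coe_injective
      refine (PNat.mul_coe _ _).trans ?_
      exact Nat.div_mul_cancel hQdvd
    · trivial
  set F : (Fin k → ℕ+) × ℕ+ → ℂ :=
    fun p => f ((p.2 : ℕ) * Q p.1) * P p.1 with hFdef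
  have hcomp : ∀ p, G' (ψ p) = F p := by
    rintro ⟨q, m⟩
    rw [hψdef, hG'def, hFdef]
    simp only
    rw [if_pos]
    · have hc : ((m * Qp q : ℕ+) : ℕ) = (m:ℕ) * Q q := PNat.mul_coe m (Qp q)
      rw [hc]
    · intro i
      rw [PNat.mul_coe]
      exact dvd_mul_of_dvd_right (Finset.dvd_lcm (Finset.mem_univ i)) _
  have hFhas : HasSum F (g G) := by
    have := (hψinj.hasSum_iff hψrange).mpr hG'has
    rwa [show G' ∘ ψ = F from funext hcomp] at this
  -- fiberwise sums
  have hfib : ∀ q : Fin k → ℕ+,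
      HasSum (fun m : ℕ+ => F (q, m))
        ((1 / ((Q q : ℕ) : ℂ) ^ k * ∑' m : ℕ+, mconv g ((m : ℕ) * Q q) / ((m : ℕ) : ℂ) ^ k)
          * P q) := by
    intro q
    have hQc : ((Q q : ℕ) : ℂ) ≠ 0 := Nat.cast_ne_zero.mpr (hQpos q).ne'
    have hpt : ∀ m : ℕ+, F (q, m)
        = (1 / ((Q q : ℕ) : ℂ) ^ k * P q) * (mconv g ((m : ℕ) * Q q) / ((m : ℕ) : ℂ) ^ k) := by
      intro m
      rw [hFdef, hfdef]
      simp only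
      have hmc : ((m : ℕ) : ℂ) ≠ 0 := Nat.cast_ne_zero.mpr m.ne_zero
      have hcast : (((m : ℕ) * Q q : ℕ) : ℂ) = ((m:ℕ):ℂ) * ((Q q : ℕ):ℂ) := by push_cast; ring
      rw [hcast]
      field_simp
      ring
    have hsummf : Summable (fun m : ℕ+ => F (q, m)) := hFhas.summable.prod_factor q
    have : ∑' m : ℕ+, F (q, m)
        = (1 / ((Q q : ℕ) : ℂ) ^ k * ∑' m : ℕ+, mconv g ((m : ℕ) * Q q) / ((m : ℕ) : ℂ) ^ k)
          * P q := by
      rw [tsum_congr hpt, tsum_mul_left]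
      ring
    exact this ▸ hsummf.hasSum
  exact HasSum.prod_fiberwise hFhas hfib
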